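/- arXiv:2108.07087 — 4 statements merged into one kernel-verified Lean document; each statement's English description precedes it below -/
import Mathlib

section
/- Let d, r and m be positive integers with m > d ≥ 2, and let N be an integer with N ≥ m(r+1)^d d^{2d}. Then for any set S ⊆ ℤ^d with |S| = N, either there is a hyperplane of ℝ^d containing at least m points of S, or the interior of the convex hull of S (taken in ℝ^d) contains a basic cube of length r. -/
noncomputable section

/-- The point of `ℝ^d` corresponding to a lattice point of `ℤ^d`. -/
def intCast (d : ℕ) (x : Fin d → ℤ) : Fin d → ℝ := fun i => (x i : ℝ)

/-- A cube of length `r` in `ℤ^d`: the set of points `a + i₁v₁ + ⋯ + i_d v_d` with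
`0 ≤ i₁, …, i_d ≤ r`, where `v₁, …, v_d` are linearly independent over `ℝ`. -/
def IsCube (d r : ℕ) (C : Set (Fin d → ℤ)) : Prop :=
  ∃ (a : Fin d → ℤ) (v : Fin d → Fin d → ℤ),
    LinearIndependent ℝ (fun j : Fin d => intCast d (v j)) ∧
    C = {x | ∃ c : Fin d → ℤ, (∀ j, 0 ≤ c j ∧ c j ≤ (r : ℤ)) ∧ x = a + ∑ j, c j • v j}

/-- A basic cube of length `r` in `ℤ^d`: a cube whose basis vectors form a `ℤ`-basis of `ℤ^d`,
i.e. generate `ℤ^d` as a `ℤ`-module. -/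
def IsBasicCube (d r : ℕ) (C : Set (Fin d → ℤ)) : Prop :=
  ∃ (a : Fin d → ℤ) (v : Fin d → Fin d → ℤ),
    LinearIndependent ℝ (fun j : Fin d => intCast d (v j)) ∧
    Submodule.span ℤ (Set.range v) = (⊤ : Submodule ℤ (Fin d → ℤ)) ∧
    C = {x | ∃ c : Fin d → ℤ, (∀ j, 0 ≤ c j ∧ c j ≤ (r : ℤ)) ∧ x = a + ∑ j, c j • v j}

open Module Set

namespace S10

variable {d : ℕ}

lemma intCast_add (x y : Fin d → ℤ) : intCast d (x + y) = intCast d x + intCast d y := by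
  funext i; simp [intCast]

lemma intCast_neg (x : Fin d → ℤ) : intCast d (-x) = - intCast d x := by
  funext i; simp [intCast]

lemma intCast_zero : intCast d 0 = 0 := by funext i; simp [intCast]

lemma intCast_zsmul (k : ℤ) (x : Fin d → ℤ) : intCast d (k • x) = (k : ℝ) • intCast d x := by
  funext i
  simp only [intCast, Pi.smul_apply, smul_eq_mul]
  push_cast
  ring

lemma intCast_injective : Function.Injective (intCast d) := by
  intro x y h
  funext i
  have := congrFun h i
  simpa [intCast] using this

lemma intCast_sum {ι : Type*} (s : Finset ι) (f : ι → Fin d → ℤ) :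
    intCast d (∑ j ∈ s, f j) = ∑ j ∈ s, intCast d (f j) := by
  classical
  induction s using Finset.induction with
  | empty => simp [intCast_zero]
  | insert _ _ h ih => rw [Finset.sum_insert h, Finset.sum_insert h, intCast_add, ih]

/-- Rationality of coordinates of lattice points w.r.t. an integer basis. -/
lemma exists_cramer (v : Fin d → Fin d → ℤ) (Vb : Basis (Fin d) ℝ (Fin d → ℝ))
    (hVb : ∀ j, Vb j = intCast d (v j)) :
    ∃ (D : ℤ) (ψ : (Fin d → ℤ) →ₗ[ℤ] (Fin d → ℤ)), D ≠ 0 ∧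
      (∀ j, ψ (v j) j = D) ∧
      ∀ (x : Fin d → ℤ) (i : Fin d), ((ψ x i : ℤ) : ℝ) = (D : ℝ) * Vb.repr (intCast d x) i := by
  classical
  set A : Matrix (Fin d) (Fin d) ℤ := Matrix.of (fun i j => v j i) with hA
  set f : ℤ →+* ℝ := Int.castRingHom ℝ
  set Ar : Matrix (Fin d) (Fin d) ℝ := f.mapMatrix A with hAr
  -- Ar is the toMatrix of Vb w.r.t. the standard basis
  have hArm : Ar = (Pi.basisFun ℝ (Fin d)).toMatrix ⇑Vb := by
    ext i j
    rw [Basis.toMatrix_apply]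
    simp only [Pi.basisFun_repr, hVb]
    rfl
  have hinv : Invertible Ar := hArm ▸ Basis.invertibleToMatrix (Pi.basisFun ℝ (Fin d)) Vb
  have hdet : Ar.det ≠ 0 := by
    exact ((Matrix.isUnit_iff_isUnit_det Ar).mp (isUnit_of_invertible Ar)).ne_zero
  have hDr : ((A.det : ℤ) : ℝ) = Ar.det := by
    rw [hAr]; exact RingHom.map_det f A
  refine ⟨A.det, A.cramer, ?_, ?_, ?_⟩
  · intro h; rw [h] at hDr; simp at hDr; exact hdet hDr.symm
  · intro j
    have : A.cramer (fun i => A i j) = Pi.single j A.det :=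
      Matrix.cramer_row_self A _ j (fun _ => rfl)
    have := congrFun this j
    simpa [hA] using this
  · intro x i
    -- cast of cramer = cramer of cast
    have hcc : ∀ i, ((A.cramer x i : ℤ) : ℝ) = Ar.cramer (intCast d x) i := by
      intro i
      rw [Matrix.cramer_apply, Matrix.cramer_apply]
      rw [show (Ar.updateCol i (intCast d x)) = f.mapMatrix (A.updateCol i x) by
        ext a b
        by_cases hb : b = i <;>
          simp [Matrix.updateCol_apply, hb, hAr, intCast] <;> rfl]
      exact RingHom.map_det f _
    -- both sides are repr coefficients
    have key : ∀ w : Fin d → ℝ, (∑ j, w j • Vb j) = fun i => Ar.mulVec w i := by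
      intro w
      funext i
      simp only [Matrix.mulVec, dotProduct]
      rw [Finset.sum_apply]
      congr 1
      funext j
      have : Ar i j = intCast d (v j) i := by simp [hAr, hA, intCast]
      rw [this, ← hVb]
      simp [mul_comm]
    have h1 : Ar.mulVec (Ar.cramer (intCast d x)) = Ar.det • (intCast d x) :=
      Matrix.mulVec_cramer Ar (intCast d x)
    have h2 : Ar.mulVec (fun j => (Ar.det) * Vb.repr (intCast d x) j)
        = Ar.det • (intCast d x) := by
      have := key (fun j => Ar.det * Vb.repr (intCast d x) j)
      have hrepr : (∑ j, (Ar.det * Vb.repr (intCast d x) j) • Vb j)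
          = Ar.det • intCast d x := by
        rw [show (∑ j, (Ar.det * Vb.repr (intCast d x) j) • Vb j)
            = Ar.det • ∑ j, (Vb.repr (intCast d x) j) • Vb j by
          rw [Finset.smul_sum]; congr 1; funext j; rw [mul_smul]]
        rw [Basis.sum_repr]
      funext i
      rw [← congrFun this i, hrepr]
    -- conclude equality of coefficient vectors using repr_sum_self
    have hker : ∀ w w' : Fin d → ℝ, Ar.mulVec w = Ar.mulVec w' → w = w' := by
      intro w w' hww
      have hs : (∑ j, w j • Vb j) = (∑ j, w' j • Vb j) := by
        rw [key w, key w']; exact funext fun i => congrFun hww i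
      have := congrArg (fun z => Vb.repr z) hs
      have h1 := Basis.repr_sum_self Vb w
      have h2 := Basis.repr_sum_self Vb w'
      calc w = ⇑(Vb.repr (∑ j, w j • Vb j)) := h1.symm
        _ = ⇑(Vb.repr (∑ j, w' j • Vb j)) := by rw [hs]
        _ = w' := h2
    have := hker _ _ (h1.trans h2.symm)
    have := congrFun this i
    rw [hcc i, this, hDr]


theorem core (v : Fin d → Fin d → ℤ) (Vb : Basis (Fin d) ℝ (Fin d → ℝ))
    (hVb : ∀ j, Vb j = intCast d (v j)) :
    ∃ (b : Fin d → Fin d → ℤ) (β : Fin d → ℝ),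
      (∀ j, 0 < β j ∧ β j ≤ 1) ∧
      (∀ j i : Fin d, (j:ℕ) < (i:ℕ) → Vb.repr (intCast d (b j)) i = 0) ∧
      (∀ j, Vb.repr (intCast d (b j)) j = β j) ∧
      (∀ j i : Fin d, (i:ℕ) < (j:ℕ) → |Vb.repr (intCast d (b j)) i| ≤ 1/2) ∧
      Submodule.span ℤ (Set.range b) = ⊤ := by
  classical
  obtain ⟨D, ψ, hD, hψv, hψ⟩ := exists_cramer v Vb hVb
  set φ : (Fin d → ℤ) → Fin d → ℝ := fun x i => Vb.repr (intCast d x) i with hφdef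
  have φ_add : ∀ x y i, φ (x + y) i = φ x i + φ y i := by
    intro x y i; simp only [hφdef, intCast_add, map_add]; rfl
  have φ_zsmul : ∀ (k : ℤ) x i, φ (k • x) i = (k:ℝ) * φ x i := by
    intro k x i; simp only [hφdef, intCast_zsmul, map_smul]; simp
  have φ_sub : ∀ x y (k : ℤ) i, φ (x - k • y) i = φ x i - (k:ℝ) * φ y i := by
    intro x y k i
    have : x - k • y = x + (-k) • y := by rw [neg_smul]; ring_nf -- maybe abel
    rw [this, φ_add, φ_zsmul]; push_cast; ring
  have φ_zero : ∀ i, φ 0 i = 0 := by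
    intro i; simp only [hφdef, intCast_zero, map_zero]; rfl
  have φ_neg : ∀ x i, φ (-x) i = - φ x i := by
    intro x i; simp only [hφdef, intCast_neg, map_neg]; rfl
  have hφv : ∀ j i, φ (v j) i = if i = j then 1 else 0 := by
    intro j i
    simp only [hφdef, ← hVb, Basis.repr_self]
    rw [Finsupp.single_apply]
    simp [eq_comm]
  -- the flag condition
  set K : Fin d → (Fin d → ℤ) → Prop := fun j x => ∀ i : Fin d, (j:ℕ) < (i:ℕ) → φ x i = 0
    with hKdef
  have hKmono : ∀ (j j' : Fin d) x, (j:ℕ) ≤ (j':ℕ) → K j x → K j' x := by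
    intro j j' x hjj hx i hi
    exact hx i (by omega)
  have hKv : ∀ j, K j (v j) := by
    intro j i hi
    rw [hφv]
    rw [if_neg]
    intro h
    rw [h] at hi
    omega
  -- existence of the pivot vectors
  have hex : ∀ j : Fin d, ∃ (y : Fin d → ℤ) (βj : ℝ), K j y ∧ φ y j = βj ∧ 0 < βj ∧ βj ≤ 1 ∧
      ∀ x, K j x → ∃ k : ℤ, φ x j = (k:ℝ) * βj := by
    intro j
    set Hgrp : AddSubgroup ℤ :=
      { carrier := {n : ℤ | ∃ x, K j x ∧ ψ x j = n}
        zero_mem' := ⟨0, fun i _ => φ_zero i, by simp⟩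
        add_mem' := by
          rintro a b ⟨x, hx, rfl⟩ ⟨y, hy, rfl⟩
          exact ⟨x + y, fun i hi => by rw [φ_add, hx i hi, hy i hi, add_zero], by simp⟩
        neg_mem' := by
          rintro a ⟨x, hx, rfl⟩
          exact ⟨-x, fun i hi => by rw [φ_neg, hx i hi, neg_zero], by simp⟩ } with hHdef
    obtain ⟨n, hn⟩ := Int.subgroup_cyclic Hgrp
    have hDmem : D ∈ Hgrp := ⟨v j, hKv j, hψv j⟩
    have hmemiff : ∀ z : ℤ, z ∈ Hgrp ↔ ∃ k : ℤ, k • n = z := by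
      intro z
      rw [hn]
      exact AddSubgroup.mem_closure_singleton
    have hnne : n ≠ 0 := by
      intro h
      obtain ⟨k, hk⟩ := (hmemiff D).mp hDmem
      rw [h] at hk
      simp at hk
      exact hD hk.symm
    have hnmem : n ∈ Hgrp := by
      rw [hn]
      exact AddSubgroup.subset_closure (Set.mem_singleton n)
    obtain ⟨y0, hy0K, hy0ψ⟩ := hnmem
    have hy0φ : φ y0 j = (n:ℝ) / (D:ℝ) := by
      have := hψ y0 j
      rw [hy0ψ] at this
      field_simp [hφdef] at this ⊢
      rw [this]
    have hDne : ((D:ℝ)) ≠ 0 := Int.cast_ne_zero.mpr hD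
    have hβne : (n:ℝ)/(D:ℝ) ≠ 0 := div_ne_zero (Int.cast_ne_zero.mpr hnne) hDne
    -- choose sign
    set y : Fin d → ℤ := if 0 < (n:ℝ)/(D:ℝ) then y0 else -y0 with hy
    set βj : ℝ := |(n:ℝ)/(D:ℝ)| with hβ
    have hKy : K j y := by
      rw [hy]
      split
      · exact hy0K
      · intro i hi; rw [φ_neg, hy0K i hi, neg_zero]
    have hyφ : φ y j = βj := by
      rw [hy, hβ]
      rcases lt_or_ge 0 ((n:ℝ)/(D:ℝ)) with h | h
      · rw [if_pos h, hy0φ, abs_of_pos h]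
      · rw [if_neg (not_lt.mpr h), φ_neg, hy0φ, abs_of_nonpos h]
    have hβpos : 0 < βj := abs_pos.mpr hβne
    have hdvd : ∀ x, K j x → ∃ k : ℤ, φ x j = (k:ℝ) * βj := by
      intro x hx
      have hxmem : ψ x j ∈ Hgrp := ⟨x, hx, rfl⟩
      obtain ⟨k, hk⟩ := (hmemiff _).mp hxmem
      have hcast : ((ψ x j : ℤ):ℝ) = (k:ℝ) * (n:ℝ) := by
        rw [← hk, smul_eq_mul]; push_cast; ring
      have := hψ x j
      rw [hcast] at this
      have hφx : φ x j = (k:ℝ) * ((n:ℝ)/(D:ℝ)) := by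
        have h2 : (k:ℝ) * (n:ℝ) = (D:ℝ) * φ x j := this
        field_simp
        linarith [h2]
      rcases abs_cases ((n:ℝ)/(D:ℝ)) with ⟨habs, _⟩ | ⟨habs, _⟩
      · exact ⟨k, by rw [hφx, hβ, habs]⟩
      · exact ⟨-k, by rw [hφx, hβ, habs]; push_cast; ring⟩
    have hβle : βj ≤ 1 := by
      obtain ⟨k, hk⟩ := hdvd (v j) (hKv j)
      rw [hφv, if_pos rfl] at hk
      have hk1 : (1:ℝ) ≤ (k:ℝ) := by
        by_contra hlt
        push_neg at hlt
        have hk0 : (k:ℝ) ≤ 0 := by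
          have : k < 1 := by exact_mod_cast hlt
          have : k ≤ 0 := by omega
          exact_mod_cast this
        nlinarith
      nlinarith
    exact ⟨y, βj, hKy, hyφ, hβpos, hβle, hdvd⟩
  choose b0 β hb0K hb0φ hβpos hβle hdvd using hex
  -- reduction
  have red : ∀ (t : ℕ) (j : Fin d), ∃ y, K j y ∧ φ y j = β j ∧
      ∀ i : Fin d, (i:ℕ) < (j:ℕ) → (j:ℕ) - t ≤ (i:ℕ) → |φ y i| ≤ 1/2 := by
    intro t
    induction t with
    | zero =>
      intro j
      exact ⟨b0 j, hb0K j, hb0φ j, fun i hi hi2 => absurd hi (by omega)⟩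
    | succ t ih =>
      intro j
      obtain ⟨y, hyK, hyφ, hyred⟩ := ih j
      by_cases hjt : (j:ℕ) ≤ t
      · exact ⟨y, hyK, hyφ, fun i hi hi2 => hyred i hi (by omega)⟩
      · push_neg at hjt
        set i₀ : Fin d := ⟨(j:ℕ) - (t+1), by omega⟩ with hi₀
        have hi₀lt : (i₀:ℕ) < (j:ℕ) := by simp [hi₀]; omega
        set c : ℤ := round (φ y i₀ / β i₀) with hc
        refine ⟨y - c • b0 i₀, ?_, ?_, ?_⟩
        · intro i hi
          rw [φ_sub, hyK i hi, hb0K i₀ i (by omega), mul_zero, sub_zero]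
        · rw [φ_sub, hyφ, hb0K i₀ j hi₀lt, mul_zero, sub_zero]
        · intro i hi hi2
          rcases eq_or_lt_of_le hi2 with heq | hlt
          · have hii : i = i₀ := by
              apply Fin.ext
              simp [hi₀, ← heq]
            rw [hii, φ_sub, hb0φ]
            have hβp := hβpos i₀
            have hβl := hβle i₀
            have heqm : φ y i₀ - (c:ℝ) * β i₀ = (φ y i₀ / β i₀ - (c:ℝ)) * β i₀ := by
              field_simp
            rw [heqm, abs_mul, abs_of_pos hβp]
            have h1 : |φ y i₀ / β i₀ - (c:ℝ)| ≤ 1/2 := by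
              rw [hc]; exact abs_sub_round _
            nlinarith [abs_nonneg (φ y i₀ / β i₀ - (c:ℝ))]
          · have hii0 : (i₀:ℕ) < (i:ℕ) := by simp only [hi₀]; omega
            rw [φ_sub, hb0K i₀ i hii0, mul_zero, sub_zero]
            exact hyred i hi (by omega)
  have redfin : ∀ j : Fin d, ∃ y, K j y ∧ φ y j = β j ∧
      ∀ i : Fin d, (i:ℕ) < (j:ℕ) → |φ y i| ≤ 1/2 := by
    intro j
    obtain ⟨y, h1, h2, h3⟩ := red d j
    exact ⟨y, h1, h2, fun i hi => h3 i hi (by omega)⟩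
  choose b1 hb1K hb1φ hb1red using redfin
  -- span
  have spanclaim : ∀ (t : ℕ) (x : Fin d → ℤ), (∀ i : Fin d, t ≤ (i:ℕ) → φ x i = 0) →
      x ∈ Submodule.span ℤ (Set.range b1) := by
    intro t
    induction t with
    | zero =>
      intro x hx
      have : intCast d x = 0 := by
        have := Basis.sum_repr Vb (intCast d x)
        rw [← this]
        apply Finset.sum_eq_zero
        intro i _
        rw [show (Vb.repr (intCast d x)) i = φ x i from rfl, hx i (Nat.zero_le _), zero_smul]
      have : x = 0 := intCast_injective (by rw [this, intCast_zero])
      rw [this]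
      exact Submodule.zero_mem _
    | succ t ih =>
      intro x hx
      by_cases ht : t < d
      · set j : Fin d := ⟨t, ht⟩ with hj
        have hKx : K j x := fun i hi => hx i (by simpa [hj] using hi)
        obtain ⟨k, hk⟩ := hdvd j x hKx
        have hx' : ∀ i : Fin d, t ≤ (i:ℕ) → φ (x - k • b1 j) i = 0 := by
          intro i hi
          rcases eq_or_lt_of_le hi with heq | hlt
          · have hij : i = j := Fin.ext (by simp [hj, ← heq])
            rw [hij, φ_sub, hk, hb1φ, sub_self]
          · rw [φ_sub, hx i hlt, hb1K j i (by simpa [hj] using hlt), mul_zero, sub_zero]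
        have hmem := ih _ hx'
        have : x = (x - k • b1 j) + k • b1 j := by ring_nf
        rw [this]
        exact Submodule.add_mem _ hmem
          (Submodule.smul_mem _ k (Submodule.subset_span (Set.mem_range_self j)))
      · push_neg at ht
        exact ih x (fun i hi => absurd (lt_of_le_of_lt hi i.isLt) (by omega))
  refine ⟨b1, β, fun j => ⟨hβpos j, hβle j⟩, ?_, hb1φ, ?_, ?_⟩
  · intro j i hij
    exact hb1K j i hij
  · intro j i hij
    exact hb1red j i hij
  · rw [Submodule.eq_top_iff']
    intro x
    exact spanclaim d x (fun i hi => absurd i.isLt (by omega))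


lemma repr_add_smul (Vb : Basis (Fin d) ℝ (Fin d → ℝ)) (x y : Fin d → ℤ) (k : ℤ) (i : Fin d) :
    Vb.repr (intCast d (x + k • y)) i
      = Vb.repr (intCast d x) i + (k:ℝ) * Vb.repr (intCast d y) i := by
  rw [intCast_add, intCast_zsmul, map_add, map_smul]
  simp

lemma repr_add_sum (Vb : Basis (Fin d) ℝ (Fin d → ℝ)) (a : Fin d → ℤ) (c : Fin d → ℤ)
    (b : Fin d → Fin d → ℤ) (i : Fin d) :
    Vb.repr (intCast d (a + ∑ j, c j • b j)) i
      = Vb.repr (intCast d a) i + ∑ j, (c j : ℝ) * Vb.repr (intCast d (b j)) i := by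
  rw [intCast_add, intCast_sum, map_add]
  simp only [Finsupp.coe_add, Pi.add_apply]
  congr 1
  rw [map_sum]
  rw [show (∑ j, Vb.repr (intCast d (c j • b j))) i = ∑ j, (Vb.repr (intCast d (c j • b j))) i by
    simp [Finsupp.finset_sum_apply]]
  congr 1
  funext j
  rw [intCast_zsmul, map_smul]
  simp

theorem corner (Vb : Basis (Fin d) ℝ (Fin d → ℝ)) (b : Fin d → Fin d → ℤ) (β : Fin d → ℝ)
    (hβ : ∀ j, 0 < β j ∧ β j ≤ 1)
    (htri : ∀ j i : Fin d, (j:ℕ) < (i:ℕ) → Vb.repr (intCast d (b j)) i = 0)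
    (hdiag : ∀ j, Vb.repr (intCast d (b j)) j = β j)
    (g : Fin d → ℝ) :
    ∃ a : Fin d → ℤ, ∀ i, g i ≤ Vb.repr (intCast d a) i ∧ Vb.repr (intCast d a) i < g i + 1 := by
  classical
  have claim : ∀ s : ℕ, ∃ a : Fin d → ℤ, ∀ i : Fin d, d - s ≤ (i:ℕ) →
      (g i ≤ Vb.repr (intCast d a) i ∧ Vb.repr (intCast d a) i < g i + 1) := by
    intro s
    induction s with
    | zero => exact ⟨0, fun i hi => absurd i.isLt (by omega)⟩
    | succ s ih =>
      obtain ⟨a, ha⟩ := ih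
      by_cases hds : d ≤ s
      · exact ⟨a, fun i hi => ha i (by omega)⟩
      · push_neg at hds
        set j : Fin d := ⟨d - (s+1), by omega⟩ with hj
        set t : ℤ := ⌈(g j - Vb.repr (intCast d a) j) / β j⌉ with ht
        refine ⟨a + t • b j, fun i hi => ?_⟩
        rw [repr_add_smul]
        rcases Nat.lt_or_ge (j:ℕ) (i:ℕ) with hlt | hge
        · rw [htri j i hlt, mul_zero, add_zero]
          exact ha i (by simp only [hj] at hlt ⊢; omega)
        · have hij : i = j := by
            apply Fin.ext
            simp only [hj] at hge hi ⊢
            omega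
          rw [hij, hdiag]
          obtain ⟨hβp, hβl⟩ := hβ j
          have h1 : (g j - Vb.repr (intCast d a) j) / β j ≤ (t:ℝ) := Int.le_ceil _
          have h2 : (t:ℝ) < (g j - Vb.repr (intCast d a) j) / β j + 1 := Int.ceil_lt_add_one _
          constructor
          · have := mul_le_mul_of_nonneg_right h1 (le_of_lt hβp)
            rw [div_mul_cancel₀ _ (ne_of_gt hβp)] at this
            linarith
          · have := mul_lt_mul_of_pos_right h2 hβp
            rw [add_mul, div_mul_cancel₀ _ (ne_of_gt hβp), one_mul] at this
            nlinarith
  obtain ⟨a, ha⟩ := claim d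
  exact ⟨a, fun i => ha i (by omega)⟩

lemma intCast_single (i : Fin d) : intCast d (Pi.single i 1) = Pi.single i (1:ℝ) := by
  funext j
  by_cases h : j = i <;> simp [intCast, Pi.single_apply, h]

theorem linIndep_of_span_top (b : Fin d → Fin d → ℤ)
    (hspan : Submodule.span ℤ (Set.range b) = ⊤) :
    LinearIndependent ℝ (fun j => intCast d (b j)) := by
  apply linearIndependent_of_top_le_span_of_card_eq_finrank
  · have h1 : ∀ z : Fin d → ℤ,
        intCast d z ∈ Submodule.span ℝ (Set.range fun j => intCast d (b j)) := by
      intro z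
      have hz : z ∈ Submodule.span ℤ (Set.range b) := by rw [hspan]; trivial
      induction hz using Submodule.span_induction with
      | mem w hw =>
        obtain ⟨j, rfl⟩ := hw
        exact Submodule.subset_span (Set.mem_range_self j)
      | zero => rw [intCast_zero]; exact Submodule.zero_mem _
      | add x y _ _ hx hy => rw [intCast_add]; exact Submodule.add_mem _ hx hy
      | smul k x _ hx =>
        rw [intCast_zsmul]
        exact Submodule.smul_mem _ _ hx
    rw [← (Pi.basisFun ℝ (Fin d)).span_eq]
    apply Submodule.span_le.mpr
    rintro _ ⟨i, rfl⟩
    have := h1 (Pi.single i 1)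
    rw [intCast_single] at this
    simpa using this
  · simp


theorem cube_in_simplex (d r : ℕ) (hd : 2 ≤ d) (hr : 1 ≤ r)
    (v : Fin d → Fin d → ℤ) (hv : LinearIndependent ℝ (fun j => intCast d (v j))) :
    ∃ (a : Fin d → ℤ) (b : Fin d → Fin d → ℤ),
      LinearIndependent ℝ (fun j => intCast d (b j)) ∧
      Submodule.span ℤ (Set.range b) = ⊤ ∧
      ∀ c : Fin d → ℤ, (∀ j, 0 ≤ c j ∧ c j ≤ (r:ℤ)) →
        ∃ T : Fin d → ℝ, (∀ i, 0 < T i) ∧ (∑ i, T i) < ((d:ℝ)^2 * ((r:ℝ)+1)) ∧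
          intCast d (a + ∑ j, c j • b j) = ∑ i, T i • intCast d (v i) := by
  classical
  haveI : Nonempty (Fin d) := ⟨⟨0, by omega⟩⟩
  have hcard : Fintype.card (Fin d) = finrank ℝ (Fin d → ℝ) := by simp
  set Vb : Basis (Fin d) ℝ (Fin d → ℝ) := basisOfLinearIndependentOfCardEqFinrank hv hcard
    with hVbdef
  have hVb : ∀ j, Vb j = intCast d (v j) := fun j =>
    congrFun (coe_basisOfLinearIndependentOfCardEqFinrank hv hcard) j
  obtain ⟨b, β, hβ, htri, hdiag, hred, hspan⟩ := core v Vb hVb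
  set g : Fin d → ℝ := fun i => 1 + (r:ℝ) * ((d:ℝ) - 1 - ((i:ℕ):ℝ)) / 2 with hg
  obtain ⟨a, ha⟩ := corner Vb b β hβ htri hdiag g
  refine ⟨a, b, linIndep_of_span_top b hspan, hspan, ?_⟩
  intro c hc
  set T : Fin d → ℝ := fun i => Vb.repr (intCast d (a + ∑ j, c j • b j)) i with hT
  have hTval : ∀ i, T i = Vb.repr (intCast d a) i
      + ∑ j, (c j : ℝ) * Vb.repr (intCast d (b j)) i := fun i => repr_add_sum Vb a c b i
  have hcr : ∀ j, (0:ℝ) ≤ (c j : ℝ) ∧ (c j : ℝ) ≤ (r:ℝ) := by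
    intro j
    constructor
    · exact_mod_cast (hc j).1
    · exact_mod_cast (hc j).2
  -- cardinality of upper index sets
  have hcard2 : ∀ i : Fin d,
      ((Finset.univ.filter (fun j : Fin d => (i:ℕ) < (j:ℕ))).card : ℝ)
        = (d:ℝ) - 1 - ((i:ℕ):ℝ) := by
    intro i
    have h1 : Finset.univ.filter (fun j : Fin d => (i:ℕ) < (j:ℕ)) = Finset.Ioi i := by
      ext j
      simp only [Finset.mem_filter, Finset.mem_univ, true_and, Finset.mem_Ioi]
      exact Fin.lt_iff_val_lt_val.symm
    rw [h1, Fin.card_Ioi]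
    have h2 : (i:ℕ) + 1 ≤ d := i.isLt
    rw [Nat.cast_sub (by omega : (i:ℕ) ≤ d - 1), Nat.cast_sub (by omega : 1 ≤ d)]
    push_cast
    ring
  -- lower bound : 1 ≤ T i
  have hTlow : ∀ i, 1 ≤ T i := by
    intro i
    have hsum : ∑ j : Fin d, (if (i:ℕ) < (j:ℕ) then -(r:ℝ)/2 else 0)
        ≤ ∑ j : Fin d, (c j : ℝ) * Vb.repr (intCast d (b j)) i := by
      apply Finset.sum_le_sum
      intro j _
      rcases Nat.lt_trichotomy (j:ℕ) (i:ℕ) with hlt | heq | hgt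
      · rw [htri j i hlt, mul_zero, if_neg (by omega)]
      · have hji : j = i := Fin.ext heq
        rw [if_neg (by omega), hji, hdiag]
        exact mul_nonneg (hcr i).1 (le_of_lt (hβ i).1)
      · rw [if_pos hgt]
        have habs := hred j i hgt
        have h1 : -((r:ℝ) * (1/2)) ≤ (c j : ℝ) * Vb.repr (intCast d (b j)) i := by
          have := neg_abs_le ((c j : ℝ) * Vb.repr (intCast d (b j)) i)
          have h2 : |(c j : ℝ) * Vb.repr (intCast d (b j)) i| ≤ (r:ℝ) * (1/2) := by
            rw [abs_mul, abs_of_nonneg (hcr j).1]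
            exact mul_le_mul (hcr j).2 habs (abs_nonneg _) (by positivity)
          linarith
        linarith
    have hsumval : ∑ j : Fin d, (if (i:ℕ) < (j:ℕ) then -(r:ℝ)/2 else 0)
        = ((d:ℝ) - 1 - ((i:ℕ):ℝ)) * (-(r:ℝ)/2) := by
      rw [← Finset.sum_filter, Finset.sum_const, nsmul_eq_mul, hcard2 i]
    have hga : g i ≤ Vb.repr (intCast d a) i := (ha i).1
    have : T i ≥ g i + ((d:ℝ) - 1 - ((i:ℕ):ℝ)) * (-(r:ℝ)/2) := by
      rw [hTval i]
      rw [← hsumval]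
      exact add_le_add hga hsum
    rw [hg] at this
    simp only at this
    linarith
  -- upper bound pointwise
  have hThigh : ∀ i, T i < 2 + (r:ℝ) + (r:ℝ) * ((d:ℝ) - 1 - ((i:ℕ):ℝ)) := by
    intro i
    have hsum : ∑ j : Fin d, (c j : ℝ) * Vb.repr (intCast d (b j)) i
        ≤ ∑ j : Fin d, ((if (i:ℕ) < (j:ℕ) then (r:ℝ)/2 else 0) + (if j = i then (r:ℝ) else 0)) := by
      apply Finset.sum_le_sum
      intro j _
      rcases Nat.lt_trichotomy (j:ℕ) (i:ℕ) with hlt | heq | hgt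
      · rw [htri j i hlt, mul_zero, if_neg (by omega), if_neg (by
          intro h; rw [h] at hlt; omega)]
        norm_num
      · have hji : j = i := Fin.ext heq
        rw [if_neg (by omega), if_pos hji, hji, hdiag]
        have := (hβ i).2
        have h0 := (hcr i).1
        have h1 := (hcr i).2
        nlinarith
      · rw [if_pos hgt, if_neg (by intro h; rw [h] at hgt; omega)]
        have habs := hred j i hgt
        have h2 : |(c j : ℝ) * Vb.repr (intCast d (b j)) i| ≤ (r:ℝ) * (1/2) := by
          rw [abs_mul, abs_of_nonneg (hcr j).1]
          exact mul_le_mul (hcr j).2 habs (abs_nonneg _) (by positivity)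
        have := le_abs_self ((c j : ℝ) * Vb.repr (intCast d (b j)) i)
        linarith
    have hsumval : ∑ j : Fin d, ((if (i:ℕ) < (j:ℕ) then (r:ℝ)/2 else 0) + (if j = i then (r:ℝ) else 0))
        = ((d:ℝ) - 1 - ((i:ℕ):ℝ)) * ((r:ℝ)/2) + (r:ℝ) := by
      rw [Finset.sum_add_distrib]
      congr 1
      · rw [← Finset.sum_filter, Finset.sum_const, nsmul_eq_mul, hcard2 i]
      · rw [Finset.sum_ite_eq' Finset.univ i (fun _ => (r:ℝ))]
        simp
    have hga : Vb.repr (intCast d a) i < g i + 1 := (ha i).2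
    have : T i < (g i + 1) + (((d:ℝ) - 1 - ((i:ℕ):ℝ)) * ((r:ℝ)/2) + (r:ℝ)) := by
      rw [hTval i]
      rw [← hsumval]
      exact add_lt_add_of_lt_of_le hga hsum
    rw [hg] at this
    simp only at this
    linarith
  -- sum of indices
  have hgauss : ∑ i : Fin d, ((i:ℕ):ℝ) = (d:ℝ) * ((d:ℝ) - 1) / 2 := by
    rw [Fin.sum_univ_eq_sum_range (fun i => ((i:ℕ):ℝ)) d]
    have h2 : (∑ i ∈ Finset.range d, i) * 2 = d * (d - 1) := Finset.sum_range_id_mul_two d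
    have h3 : ((∑ i ∈ Finset.range d, i : ℕ) : ℝ) * 2 = (d:ℝ) * ((d:ℝ) - 1) := by
      rw [show ((∑ i ∈ Finset.range d, i : ℕ) : ℝ) * 2 = (((∑ i ∈ Finset.range d, i) * 2 : ℕ) : ℝ) by push_cast; ring]
      rw [h2]
      rw [Nat.cast_mul, Nat.cast_sub (by omega : 1 ≤ d)]
      push_cast
      ring
    rw [show (∑ i ∈ Finset.range d, ((i:ℕ):ℝ)) = ((∑ i ∈ Finset.range d, i : ℕ) : ℝ) by push_cast; rfl]
    linarith
  -- total sum bound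
  have hsumT : ∑ i, T i < (d:ℝ)^2 * ((r:ℝ)+1) := by
    have h1 : ∑ i, T i < ∑ i : Fin d, (2 + (r:ℝ) + (r:ℝ) * ((d:ℝ) - 1 - ((i:ℕ):ℝ))) :=
      Finset.sum_lt_sum_of_nonempty Finset.univ_nonempty (fun i _ => hThigh i)
    have h2 : ∑ i : Fin d, (2 + (r:ℝ) + (r:ℝ) * ((d:ℝ) - 1 - ((i:ℕ):ℝ)))
        = (2 + (r:ℝ)) * d + (r:ℝ) * ((d:ℝ) * ((d:ℝ)-1) - (d:ℝ)*((d:ℝ)-1)/2) := by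
      rw [Finset.sum_add_distrib]
      rw [Finset.sum_const, ← Finset.mul_sum]
      have : ∑ i : Fin d, ((d:ℝ) - 1 - ((i:ℕ):ℝ)) = (d:ℝ)*((d:ℝ)-1) - (d:ℝ)*((d:ℝ)-1)/2 := by
        rw [Finset.sum_sub_distrib, Finset.sum_sub_distrib, hgauss]
        simp [Finset.sum_const, Finset.card_univ]
        ring
      rw [this]
      simp [Finset.card_univ]
      ring
    have hd2 : (2:ℝ) ≤ (d:ℝ) := by exact_mod_cast hd
    have hr1 : (1:ℝ) ≤ (r:ℝ) := by exact_mod_cast hr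
    have hd0 : (0:ℝ) ≤ (d:ℝ) := by linarith
    have hr0 : (0:ℝ) ≤ (r:ℝ) := by linarith
    nlinarith [h1, h2, mul_nonneg (mul_nonneg hr0 hd0) (by linarith : (0:ℝ) ≤ (d:ℝ) - 1),
      mul_nonneg hd0 (by linarith : (0:ℝ) ≤ (d:ℝ) - 2)]
  -- conclusion
  refine ⟨T, fun i => lt_of_lt_of_le one_pos (hTlow i), hsumT, ?_⟩
  conv_lhs => rw [← Basis.sum_repr Vb (intCast d (a + ∑ j, c j • b j))]
  exact Finset.sum_congr rfl (fun i _ => by rw [hVb i])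


lemma ext_lemma : ∀ (k : ℕ) (W : Submodule ℝ (Fin d → ℝ)), finrank ℝ W + k = d - 1 →
    ∃ W', W ≤ W' ∧ finrank ℝ W' = d - 1 := by
  intro k
  induction k with
  | zero => exact fun W hW => ⟨W, le_refl W, by omega⟩
  | succ k ih =>
    intro W hW
    have hfr : finrank ℝ (Fin d → ℝ) = d := by simp
    have hlt : finrank ℝ W < finrank ℝ (Fin d → ℝ) := by omega
    obtain ⟨x, hx⟩ := Submodule.exists_of_finrank_lt W hlt
    have hxW : x ∉ W := by simpa using hx 1 one_ne_zero
    have hx0 : x ≠ 0 := by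
      intro h
      exact hxW (h ▸ Submodule.zero_mem W)
    have hinf : (ℝ ∙ x) ⊓ W = ⊥ := by
      rw [eq_bot_iff]
      rintro y ⟨hy1, hy2⟩
      obtain ⟨c, rfl⟩ := Submodule.mem_span_singleton.mp hy1
      rcases eq_or_ne c 0 with rfl | hc
      · simpa using Submodule.zero_mem ⊥
      · exact absurd hy2 (hx c hc)
    have hsup : finrank ℝ ((ℝ ∙ x) ⊔ W : Submodule ℝ (Fin d → ℝ)) = finrank ℝ W + 1 := by
      have := Submodule.finrank_sup_add_finrank_inf_eq (ℝ ∙ x) W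
      rw [hinf] at this
      rw [finrank_span_singleton hx0] at this
      simp at this
      omega
    obtain ⟨W', hle, hfr'⟩ := ih ((ℝ ∙ x) ⊔ W) (by omega)
    exact ⟨W', le_trans le_sup_right hle, hfr'⟩

lemma hyperplane_case (F : Set (Fin d → ℤ)) (hd : 2 ≤ d) (hF : (intCast d '' F).Nonempty)
    (hspan : affineSpan ℝ (intCast d '' F) ≠ ⊤) :
    ∃ V : AffineSubspace ℝ (Fin d → ℝ), finrank ℝ V.direction = d - 1 ∧
      intCast d '' F ⊆ (V : Set (Fin d → ℝ)) := by
  set s := intCast d '' F with hs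
  set A := affineSpan ℝ s with hA
  obtain ⟨p, hp⟩ := hF
  have hpA : p ∈ A := subset_affineSpan ℝ s hp
  have hWtop : A.direction ≠ ⊤ := by
    intro htop
    apply hspan
    rw [← hA] at *
    rw [eq_top_iff]
    intro y _
    have hyd : y -ᵥ p ∈ A.direction := htop ▸ Submodule.mem_top
    have := AffineSubspace.vadd_mem_of_mem_direction hyd hpA
    simpa using this
  have hlt : finrank ℝ A.direction < d := by
    have hfr : finrank ℝ (Fin d → ℝ) = d := by simp
    have := Submodule.finrank_lt (K := ℝ) (V := Fin d → ℝ) hWtop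
    omega
  obtain ⟨W', hle, hfr'⟩ := ext_lemma (d - 1 - finrank ℝ A.direction) A.direction (by omega)
  refine ⟨AffineSubspace.mk' p W', ?_, ?_⟩
  · rw [AffineSubspace.direction_mk']
    exact hfr'
  · intro q hq
    have h1 : q -ᵥ p ∈ A.direction :=
      AffineSubspace.vsub_mem_direction (subset_affineSpan ℝ s hq) hpA
    have h2 : q -ᵥ p ∈ W' := hle h1
    have := AffineSubspace.vadd_mem_mk' p h2
    simpa using this


end S10

open S10 in
theorem statement10 (d r m N : ℕ) (hr : 1 ≤ r) (hd : 2 ≤ d) (hm : d < m)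
    (hN : m * (r + 1) ^ d * d ^ (2 * d) ≤ N)
    (S : Set (Fin d → ℤ)) (hS : S.Finite) (hcard : S.ncard = N) :
    (∃ V : AffineSubspace ℝ (Fin d → ℝ), Module.finrank ℝ V.direction = d - 1 ∧
      m ≤ (intCast d '' S ∩ (V : Set (Fin d → ℝ))).ncard) ∨
    (∃ C : Set (Fin d → ℤ), IsBasicCube d r C ∧
      intCast d '' C ⊆ interior (convexHull ℝ (intCast d '' S))) := by
  classical
  set M : ℕ := d^2 * (r+1) with hMdef
  have hdpos : 0 < d := by omega
  have hMpos : 0 < M := by positivity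
  haveI : NeZero M := ⟨by omega⟩
  set Tf := hS.toFinset with hTf
  have hTcard : Tf.card = N := by
    rw [hTf, ← hcard, Set.ncard_eq_toFinset_card _ hS]
  set cls : (Fin d → ℤ) → (Fin d → ZMod M) := fun x i => ((x i : ℤ) : ZMod M) with hcls
  have hMN : M ^ d * m ≤ N := by
    calc M ^ d * m = m * ((d^2)^d * (r+1)^d) := by rw [hMdef, mul_pow]; ring
      _ = m * (r + 1) ^ d * d ^ (2*d) := by rw [← pow_mul]; ring
      _ ≤ N := hN
  have hpig : ∃ y ∈ (Finset.univ : Finset (Fin d → ZMod M)),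
      (m-1) < (Tf.filter (fun x => cls x = y)).card := by
    apply Finset.exists_lt_card_fiber_of_mul_lt_card_of_maps_to (fun a _ => Finset.mem_univ _)
    have hcardZ : (Finset.univ : Finset (Fin d → ZMod M)).card = M ^ d := by
      simp [Finset.card_univ, ZMod.card]
    rw [hcardZ, hTcard]
    have hMd : 0 < M ^ d := pow_pos hMpos d
    have h1 : M ^ d * (m - 1) < M ^ d * m := by
      apply Nat.mul_lt_mul_of_le_of_lt (le_refl _) (by omega) (by omega)
    omega
  obtain ⟨y₀, _, hfib⟩ := hpig
  set F : Finset (Fin d → ℤ) := Tf.filter (fun x => cls x = y₀) with hFdef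
  have hFcard : m ≤ F.card := by omega
  have hFS : (↑F : Set (Fin d → ℤ)) ⊆ S := by
    intro x hx
    have := (Finset.mem_filter.mp hx).1
    rwa [hTf, Set.Finite.mem_toFinset] at this
  have hFcong : ∀ x ∈ F, cls x = y₀ := fun x hx => (Finset.mem_filter.mp hx).2
  have hFne0 : F.Nonempty := Finset.card_pos.mp (by omega)
  have hFne : (intCast d '' (↑F : Set (Fin d → ℤ))).Nonempty :=
    Set.Nonempty.image _ ⟨hFne0.choose, hFne0.choose_spec⟩
  by_cases htop : affineSpan ℝ (intCast d '' (↑F : Set (Fin d → ℤ))) = ⊤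
  · -- cube case
    right
    obtain ⟨t, hts, htspan, htind⟩ :=
      exists_affineIndependent ℝ (Fin d → ℝ) (intCast d '' (↑F : Set (Fin d → ℤ)))
    have httop : affineSpan ℝ t = ⊤ := htspan.trans htop
    have htfin : t.Finite := ((F.finite_toSet.image (intCast d)).subset hts)
    haveI := htfin.fintype
    have hfr : finrank ℝ (Fin d → ℝ) = d := by simp
    have hcardt : Fintype.card t = d + 1 := by
      have h := (AffineIndependent.affineSpan_eq_top_iff_card_eq_finrank_add_one htind).mp
        (by rw [Subtype.range_coe]; exact httop)
      rw [h, hfr]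
    set e : Fin (d+1) ≃ ↥t := Fintype.equivOfCardEq (by rw [hcardt, Fintype.card_fin]) with he
    set p : Fin (d+1) → (Fin d → ℝ) := fun k => ((e k : ↥t) : Fin d → ℝ) with hp
    have hpind : AffineIndependent ℝ p := htind.comp_embedding e.toEmbedding
    have hrangep : Set.range p = t := by
      rw [hp]
      rw [show (fun k => ((e k : ↥t) : Fin d → ℝ)) = (Subtype.val ∘ ⇑e) from rfl]
      rw [Set.range_comp, Equiv.range_eq_univ, Set.image_univ, Subtype.range_coe]
    set B : AffineBasis (Fin (d+1)) ℝ (Fin d → ℝ) :=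
      ⟨p, hpind, by rw [hrangep]; exact httop⟩ with hB
    have hBcoe : ⇑B = p := rfl
    have hlift : ∀ k : Fin (d+1), ∃ zz : Fin d → ℤ, zz ∈ F ∧ intCast d zz = p k := by
      intro k
      have hmem : p k ∈ intCast d '' (↑F : Set (Fin d → ℤ)) := by
        apply hts
        rw [← hrangep]
        exact Set.mem_range_self k
      obtain ⟨zz, hzz, hzc⟩ := hmem
      exact ⟨zz, hzz, hzc⟩
    choose z hzF hzc using hlift
    have hdvd : ∀ (k : Fin (d+1)) (i : Fin d), (M:ℤ) ∣ (z k i - z 0 i) := by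
      intro k i
      have h1 : cls (z k) = cls (z 0) := (hFcong _ (hzF k)).trans (hFcong _ (hzF 0)).symm
      have h2 : ((z k i : ℤ) : ZMod M) = ((z 0 i : ℤ) : ZMod M) := congrFun h1 i
      have h3 := (ZMod.intCast_eq_intCast_iff _ _ _).mp h2
      have h4 := Int.ModEq.dvd h3
      have := dvd_neg.mpr h4
      rwa [neg_sub] at this
    set w : Fin d → Fin d → ℤ := fun j i => (z j.succ i - z 0 i) / (M:ℤ) with hw
    have hexact : ∀ j i, ((M:ℤ)) * w j i = z j.succ i - z 0 i :=
      fun j i => Int.mul_ediv_cancel' (hdvd j.succ i)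
    have hMr0 : ((M:ℕ):ℝ) ≠ 0 := Nat.cast_ne_zero.mpr (by omega)
    have hwc : ∀ j i, ((w j i : ℤ):ℝ) = ((p j.succ i) - (p 0 i)) / ((M:ℕ):ℝ) := by
      intro j i
      have h1 := hexact j i
      have h2 : ((M:ℕ):ℝ) * ((w j i : ℤ):ℝ) = ((z j.succ i : ℤ):ℝ) - ((z 0 i : ℤ):ℝ) := by
        exact_mod_cast congrArg (fun q : ℤ => (q : ℝ)) h1
      have h3 : ((z j.succ i : ℤ):ℝ) = p j.succ i := congrFun (hzc j.succ) i
      have h4 : ((z 0 i : ℤ):ℝ) = p 0 i := congrFun (hzc 0) i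
      rw [h3, h4] at h2
      field_simp
      linarith
    have hpw : ∀ j, p j.succ - p 0 = ((M:ℕ):ℝ) • intCast d (w j) := by
      intro j
      funext i
      simp only [Pi.sub_apply, Pi.smul_apply, smul_eq_mul]
      rw [show intCast d (w j) i = ((w j i : ℤ):ℝ) from rfl, hwc j i]
      field_simp
    have h1 := (affineIndependent_iff_linearIndependent_vsub ℝ p 0).mp hpind
    set es : Fin d ≃ {i : Fin (d+1) // i ≠ (0 : Fin (d+1))} :=
      { toFun := fun j => ⟨j.succ, Fin.succ_ne_zero j⟩
        invFun := fun s => (s : Fin (d+1)).pred s.2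
        left_inv := fun j => by simp
        right_inv := fun s => by simp } with hes
    have h2 : LinearIndependent ℝ (fun j : Fin d => p (j.succ) -ᵥ p 0) :=
      h1.comp es es.injective
    have hu : LinearIndependent ℝ (fun j => intCast d (w j)) := by
      have h3 : (fun j => intCast d (w j))
          = fun j => (Units.mk0 (((M:ℕ):ℝ)⁻¹) (inv_ne_zero hMr0) : ℝˣ) • (p j.succ -ᵥ p 0) := by
        funext j
        rw [vsub_eq_sub, hpw j]
        rw [Units.smul_def]
        simp only [Units.val_mk0]
        rw [smul_smul, inv_mul_cancel₀ hMr0, one_smul]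
      rw [h3]
      exact h2.units_smul (fun _ => Units.mk0 (((M:ℕ):ℝ)⁻¹) (inv_ne_zero hMr0))
    obtain ⟨a, b, hbind, hbspan, hmain⟩ := cube_in_simplex d r hd hr w hu
    refine ⟨{x | ∃ c : Fin d → ℤ, (∀ j, 0 ≤ c j ∧ c j ≤ (r:ℤ)) ∧
        x = (z 0 + a) + ∑ j, c j • b j}, ⟨z 0 + a, b, hbind, hbspan, rfl⟩, ?_⟩
    rintro - ⟨x, ⟨c, hcb, rfl⟩, rfl⟩
    obtain ⟨T, hTpos, hTsum, hxeq⟩ := hmain c hcb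
    have hx : intCast d (z 0 + a + ∑ j, c j • b j) = p 0 + ∑ i, T i • intCast d (w i) := by
      rw [add_assoc, intCast_add, hzc 0, hxeq]
    set ww : Fin (d+1) → ℝ :=
      fun k => Fin.cases (1 - (∑ i, T i)/((M:ℕ):ℝ)) (fun i => T i / ((M:ℕ):ℝ)) k with hww
    have hsum1 : ∑ k, ww k = 1 := by
      rw [Fin.sum_univ_succ]
      simp only [hww, Fin.cases_zero, Fin.cases_succ]
      rw [← Finset.sum_div]
      field_simp
      ring
    have hcomb : Finset.univ.affineCombination ℝ p ww
        = intCast d (z 0 + a + ∑ j, c j • b j) := by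
      rw [Finset.affineCombination_eq_weightedVSubOfPoint_vadd_of_sum_eq_one _ ww p hsum1 (p 0)]
      rw [Finset.weightedVSubOfPoint_apply]
      rw [hx]
      rw [Fin.sum_univ_succ]
      simp only [hww, Fin.cases_zero, Fin.cases_succ, vsub_self, smul_zero, zero_add]
      have hterm : ∀ i : Fin d, (T i / ((M:ℕ):ℝ)) • (p i.succ -ᵥ p 0) = T i • intCast d (w i) := by
        intro i
        rw [vsub_eq_sub, hpw i, smul_smul, div_mul_cancel₀ _ hMr0]
      rw [Finset.sum_congr rfl (fun i _ => hterm i)]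
      exact add_comm _ _
    have hM2 : ((M:ℕ):ℝ) = (d:ℝ)^2 * ((r:ℝ)+1) := by rw [hMdef]; push_cast; ring
    have hMrpos : (0:ℝ) < ((M:ℕ):ℝ) := by positivity
    have hcoord : ∀ k, 0 < B.coord k (intCast d (z 0 + a + ∑ j, c j • b j)) := by
      intro k
      rw [← hcomb, ← hBcoe, AffineBasis.coord_apply_combination_of_mem B (Finset.mem_univ k) hsum1]
      refine Fin.cases ?_ ?_ k
      · simp only [hww, Fin.cases_zero]
        rw [sub_pos, div_lt_one hMrpos, hM2]
        exact hTsum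
      · intro i
        simp only [hww, Fin.cases_succ]
        exact div_pos (hTpos i) hMrpos
    have hmem : intCast d (z 0 + a + ∑ j, c j • b j)
        ∈ interior (convexHull ℝ (Set.range ⇑B)) := by
      rw [AffineBasis.interior_convexHull B]
      exact hcoord
    have hsub2 : Set.range ⇑B ⊆ intCast d '' S := by
      rw [hBcoe, hrangep]
      exact hts.trans (Set.image_mono hFS)
    have := interior_mono (convexHull_mono hsub2) hmem
    rwa [show (z 0 + a) + ∑ j, c j • b j = z 0 + a + ∑ j, c j • b j from rfl]
  · -- hyperplane case
    left
    obtain ⟨V, hVfr, hVsub⟩ := hyperplane_case (↑F) hd hFne htop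
    refine ⟨V, hVfr, ?_⟩
    have hsub : intCast d '' (↑F : Set (Fin d → ℤ)) ⊆ intCast d '' S ∩ (V : Set (Fin d → ℝ)) :=
      Set.subset_inter (Set.image_mono hFS) hVsub
    have hfin : (intCast d '' S ∩ (V : Set (Fin d → ℝ))).Finite :=
      Set.Finite.inter_of_left (Set.Finite.image _ hS) _
    calc m ≤ F.card := hFcard
      _ = (↑F : Set (Fin d → ℤ)).ncard := (Set.ncard_coe_finset F).symm
      _ = (intCast d '' (↑F : Set (Fin d → ℤ))).ncard :=
          (Set.ncard_image_of_injective _ intCast_injective).symm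
      _ ≤ _ := Set.ncard_le_ncard hsub hfin
end
end

section
/- Let T ⊆ ℝ^d be a finite set that is ℓ-hole-free. Then there exists ε > 0 such that for every ε-perturbation f : T → T' of T, the set T' is also ℓ-hole-free. -/
noncomputable section

/-- A finite set `S ⊆ ℝ^d` is `ℓ`-hole-free if for every `ℓ` distinct points of `S` there is a
point of `S` lying in the interior of the convex hull of those points. -/
def HoleFree {d : ℕ} (ℓ : ℕ) (S : Set (EuclideanSpace ℝ (Fin d))) : Prop :=
  ∀ T : Set (EuclideanSpace ℝ (Fin d)), T ⊆ S → T.Finite → T.ncard = ℓ →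
    ∃ s ∈ S, s ∈ interior (convexHull ℝ T)

lemma perturb_ball_subset {d : ℕ} (U : Set (EuclideanSpace ℝ (Fin d))) (hU : U.Finite)
    (g : EuclideanSpace ℝ (Fin d) → EuclideanSpace ℝ (Fin d)) (ε r : ℝ) (hε0 : 0 < ε)
    (hg : ∀ u ∈ U, ‖u - g u‖ < ε)
    (c : EuclideanSpace ℝ (Fin d)) (hball : Metric.ball c r ⊆ convexHull ℝ U) :
    Metric.ball c (r - ε) ⊆ convexHull ℝ (g '' U) := by
  intro y hy
  by_contra hy'
  have hrε : 0 < r - ε := by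
    by_contra h
    exact (Metric.ball_eq_empty.2 (not_lt.1 h)).subset hy
  have hr0 : 0 < r := by linarith
  have hUne : U.Nonempty := by
    have hc : c ∈ convexHull ℝ U := hball (Metric.mem_ball_self hr0)
    exact convexHull_nonempty_iff.1 ⟨c, hc⟩
  have hclosed : IsClosed (convexHull ℝ (g '' U)) :=
    ((hU.image g).isCompact_convexHull ℝ).isClosed
  obtain ⟨φ, u, hφ, hφy⟩ :=
    geometric_hahn_banach_closed_point (convex_convexHull ℝ _) hclosed hy'
  -- φ < u on convexHull (g '' U), u < φ y
  have hUb : convexHull ℝ U ⊆ {x | φ x ≤ u + ‖φ‖ * ε} := by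
    apply convexHull_min ?_ (convex_halfSpace_le ⟨map_add φ, map_smul φ⟩ _)
    intro x hx
    show φ x ≤ u + ‖φ‖ * ε
    have h1 : φ (g x) < u := hφ _ (subset_convexHull ℝ _ ⟨x, hx, rfl⟩)
    have h2 : φ (x - g x) ≤ ‖φ‖ * ε := by
      calc φ (x - g x) ≤ ‖φ (x - g x)‖ := le_abs_self _
        _ ≤ ‖φ‖ * ‖x - g x‖ := φ.le_opNorm _
        _ ≤ ‖φ‖ * ε := mul_le_mul_of_nonneg_left (le_of_lt (hg x hx)) (norm_nonneg _)
    have : φ x = φ (g x) + φ (x - g x) := by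
      rw [← map_add]; congr 1; abel
    linarith
  obtain ⟨a, ha⟩ := hUne
  have hφa : φ (g a) < u := hφ _ (subset_convexHull ℝ _ ⟨a, ha, rfl⟩)
  have hφpos : 0 < ‖φ‖ := by
    rcases lt_or_eq_of_le (norm_nonneg φ) with h | h
    · exact h
    · exfalso
      have h1 : ‖φ (y - g a)‖ ≤ ‖φ‖ * ‖y - g a‖ := φ.le_opNorm _
      rw [← h] at h1
      have h2 : φ (y - g a) = φ y - φ (g a) := by rw [map_sub]
      rw [h2, Real.norm_eq_abs] at h1
      have := abs_nonneg (φ y - φ (g a))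
      have h3 : φ y - φ (g a) = 0 := by
        have : |φ y - φ (g a)| = 0 := le_antisymm (by linarith) (abs_nonneg _)
        exact abs_eq_zero.1 this
      linarith
  have hyc : φ y < φ c + ‖φ‖ * (r - ε) := by
    have : φ y = φ c + φ (y - c) := by rw [← map_add]; congr 1; abel
    have h2 : φ (y - c) ≤ ‖φ‖ * ‖y - c‖ := le_trans (le_abs_self _) (φ.le_opNorm _)
    have h3 : ‖φ‖ * ‖y - c‖ < ‖φ‖ * (r - ε) := by
      apply mul_lt_mul_of_pos_left _ hφpos
      simpa [dist_eq_norm] using hy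
    linarith
  -- so u + ‖φ‖ε < φ c + ‖φ‖ r
  have hkey : u + ‖φ‖ * ε < φ c + ‖φ‖ * r := by
    have := hφy
    nlinarith [norm_nonneg φ]
  set t : ℝ := (u + ‖φ‖ * ε - φ c) / r with ht
  have htlt : t < ‖φ‖ := by
    rw [ht, div_lt_iff₀ hr0]
    linarith
  obtain ⟨x, hx1, hx2⟩ := φ.exists_lt_apply_of_lt_opNorm htlt
  have hx2' : t < φ x ∨ t < φ (-x) := by
    rw [Real.norm_eq_abs] at hx2
    rcases abs_cases (φ x) with ⟨h, _⟩ | ⟨h, _⟩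
    · left; rwa [h] at hx2
    · right; rw [map_neg]; rw [h] at hx2; linarith
  obtain ⟨v, hv1, hv2⟩ : ∃ v, ‖v‖ < 1 ∧ t < φ v := by
    rcases hx2' with h | h
    · exact ⟨x, hx1, h⟩
    · exact ⟨-x, by simpa using hx1, h⟩
  have hz : c + r • v ∈ Metric.ball c r := by
    simp only [Metric.mem_ball, dist_eq_norm]
    have : c + r • v - c = r • v := by abel
    rw [this, norm_smul, Real.norm_eq_abs, abs_of_pos hr0]
    calc r * ‖v‖ < r * 1 := mul_lt_mul_of_pos_left hv1 hr0
      _ = r := mul_one r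
  have hzb : φ (c + r • v) ≤ u + ‖φ‖ * ε := hUb (hball hz)
  have : φ (c + r • v) = φ c + r * φ v := by simp [map_add, map_smul, smul_eq_mul]
  have hrt : r * t = u + ‖φ‖ * ε - φ c := by
    rw [ht, mul_div_cancel₀ _ (ne_of_gt hr0)]
  nlinarith [mul_lt_mul_of_pos_left hv2 hr0]

theorem statement16 (d ℓ : ℕ) (T : Set (EuclideanSpace ℝ (Fin d))) (hT : T.Finite)
    (hhf : HoleFree ℓ T) :
    ∃ ε : ℝ, 0 < ε ∧
      ∀ (T' : Set (EuclideanSpace ℝ (Fin d)))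
        (f : EuclideanSpace ℝ (Fin d) → EuclideanSpace ℝ (Fin d)),
        Set.BijOn f T T' → (∀ x ∈ T, ‖x - f x‖ < ε) → HoleFree ℓ T' := by
  classical
  set P : Finset (Finset (EuclideanSpace ℝ (Fin d))) :=
    hT.toFinset.powerset.filter (fun F => F.card = ℓ) with hP
  have hw : ∀ F ∈ P, ∃ s ∈ T, ∃ r, 0 < r ∧
      Metric.ball s r ⊆ convexHull ℝ (F : Set (EuclideanSpace ℝ (Fin d)))  := by
    intro F hF
    simp only [hP, Finset.mem_filter, Finset.mem_powerset] at hF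
    obtain ⟨hF1, hF2⟩ := hF
    have hsub : (F : Set (EuclideanSpace ℝ (Fin d))) ⊆ T := by
      intro x hx
      exact hT.mem_toFinset.1 (hF1 hx)
    obtain ⟨s, hsT, hsi⟩ := hhf F hsub F.finite_toSet (by
      rw [Set.ncard_coe_finset]; exact hF2)
    rw [mem_interior_iff_mem_nhds, Metric.mem_nhds_iff] at hsi
    obtain ⟨r, hr, hball⟩ := hsi
    exact ⟨s, hsT, r, hr, hball⟩
  choose! s hsT r hr hball using hw
  set Q : Finset ℝ := insert (1:ℝ) (P.image fun F => r F / 3) with hQ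
  have hQne : Q.Nonempty := ⟨1, Finset.mem_insert_self _ _⟩
  refine ⟨Q.min' hQne, ?_, ?_⟩
  · have := Q.min'_mem hQne
    rcases Finset.mem_insert.1 this with h | h
    · rw [h]; norm_num
    · obtain ⟨F, hF, hFe⟩ := Finset.mem_image.1 h
      rw [← hFe]
      have := hr F hF
      linarith
  · intro T' f hbij hper U' hU'T' hU'fin hU'card
    set U : Set (EuclideanSpace ℝ (Fin d)) := T ∩ f ⁻¹' U' with hU
    have hUT : U ⊆ T := Set.inter_subset_left
    have hUfin : U.Finite := hT.inter_of_left _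
    have himg : f '' U = U' := by
      apply Set.Subset.antisymm
      · rintro _ ⟨x, ⟨_, hx2⟩, rfl⟩; exact hx2
      · intro u' hu'
        obtain ⟨x, hxT, rfl⟩ := hbij.surjOn (hU'T' hu')
        exact ⟨x, ⟨hxT, hu'⟩, rfl⟩
    have hUcard : U.ncard = ℓ := by
      rw [← hU'card, ← himg, Set.ncard_image_of_injOn (hbij.injOn.mono hUT)]
    set F : Finset (EuclideanSpace ℝ (Fin d)) := hUfin.toFinset with hF
    have hFU : (F : Set (EuclideanSpace ℝ (Fin d))) = U := hUfin.coe_toFinset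
    have hFP : F ∈ P := by
      simp only [hP, Finset.mem_filter, Finset.mem_powerset]
      constructor
      · intro x hx
        exact hT.mem_toFinset.2 (hUT (hUfin.mem_toFinset.1 hx))
      · rw [← hUcard, Set.ncard_eq_toFinset_card _ hUfin]
    have hεF : Q.min' hQne ≤ r F / 3 := by
      exact Finset.min'_le _ _ (Finset.mem_insert_of_mem (Finset.mem_image_of_mem _ hFP))
    have hper' : ∀ u ∈ U, ‖u - f u‖ < r F / 3 :=
      fun u hu => lt_of_lt_of_le (hper u (hUT hu)) hεF
    have hball' : Metric.ball (s F) (r F - r F / 3) ⊆ convexHull ℝ (f '' U) := by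
      apply perturb_ball_subset U hUfin f (r F / 3) (r F) (by linarith [hr F hFP]) hper'
      rw [← hFU]
      exact hball F hFP
    refine ⟨f (s F), hbij.mapsTo (hsT F hFP), ?_⟩
    rw [mem_interior_iff_mem_nhds, Metric.mem_nhds_iff]
    refine ⟨r F / 3, by linarith [hr F hFP], ?_⟩
    intro z hz
    rw [← himg]
    apply hball'
    simp only [Metric.mem_ball, dist_eq_norm] at hz ⊢
    have h1 : ‖s F - f (s F)‖ < r F / 3 :=
      lt_of_lt_of_le (hper _ (hsT F hFP)) hεF
    calc ‖z - s F‖ ≤ ‖z - f (s F)‖ + ‖f (s F) - s F‖ := by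
          have : z - s F = (z - f (s F)) + (f (s F) - s F) := by abel
          rw [this]; exact norm_add_le _ _
      _ < r F / 3 + r F / 3 := by
          rw [norm_sub_rev] at h1; exact add_lt_add hz h1
      _ ≤ r F - r F / 3 := by linarith [hr F hFP]
end
end

section
/- For every finite set A ⊆ ℝ^d there exists ε > 0 such that every ε-perturbation f : A → B is negligible. -/
noncomputable section

open RealInnerProductSpace

theorem statement17 (d : ℕ) (A : Set (EuclideanSpace ℝ (Fin d))) (hA : A.Finite) :
    ∃ ε : ℝ, 0 < ε ∧
      ∀ (B : Set (EuclideanSpace ℝ (Fin d)))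
        (f : EuclideanSpace ℝ (Fin d) → EuclideanSpace ℝ (Fin d)),
        Set.BijOn f A B → (∀ x ∈ A, ‖x - f x‖ < ε) →
        ∀ S : Set (EuclideanSpace ℝ (Fin d)), S ⊆ A → ∀ x ∈ A,
          x ∈ interior (convexHull ℝ S) → f x ∈ interior (convexHull ℝ (f '' S)) := by
  classical
  set P : Set (Set (EuclideanSpace ℝ (Fin d)) × EuclideanSpace ℝ (Fin d)) :=
    {p | p.1 ⊆ A ∧ p.2 ∈ A ∧ p.2 ∈ interior (convexHull ℝ p.1)} with hPdef
  have hPfin : P.Finite := by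
    apply (hA.finite_subsets.prod hA).subset
    rintro ⟨S, x⟩ ⟨h1, h2, _⟩
    exact ⟨h1, h2⟩
  -- choose a radius for each good pair
  have hδex : ∀ p ∈ P, ∃ r > 0, Metric.closedBall p.2 r ⊆ convexHull ℝ p.1 := by
    rintro ⟨S, x⟩ ⟨_, _, hx⟩
    obtain ⟨r, hr, hball⟩ := Metric.isOpen_iff.1 isOpen_interior x hx
    exact ⟨r / 2, by positivity,
      (Metric.closedBall_subset_ball (by linarith)).trans
        (hball.trans interior_subset)⟩
  choose! δ hδpos hδball using hδex
  -- take the minimum over the finite set of pairs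
  set F : Finset ℝ := insert 1 (hPfin.toFinset.image (fun p => δ p / 3)) with hF
  have hFne : F.Nonempty := ⟨1, Finset.mem_insert_self _ _⟩
  set ε := F.min' hFne with hε
  have hεpos : 0 < ε := by
    rw [hε, Finset.lt_min'_iff]
    intro a ha
    rcases Finset.mem_insert.1 ha with rfl | ha
    · exact one_pos
    · obtain ⟨p, hp, rfl⟩ := Finset.mem_image.1 ha
      have := hδpos p (hPfin.mem_toFinset.1 hp)
      linarith
  refine ⟨ε, hεpos, ?_⟩
  intro B f _ hper S hS x hxA hx
  have hpP : (S, x) ∈ P := ⟨hS, hxA, hx⟩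
  have hεle : 3 * ε ≤ δ (S, x) := by
    have : ε ≤ δ (S, x) / 3 :=
      F.min'_le _ (Finset.mem_insert_of_mem
        (Finset.mem_image_of_mem _ (hPfin.mem_toFinset.2 hpP)))
    linarith
  have hSfin : S.Finite := hA.subset hS
  have hSne : S.Nonempty := convexHull_nonempty_iff.1 ⟨x, interior_subset hx⟩
  have hKconv : Convex ℝ (convexHull ℝ (f '' S)) := convex_convexHull ℝ _
  have hKcl : IsClosed (convexHull ℝ (f '' S)) :=
    ((hSfin.image f).isCompact_convexHull ℝ).isClosed
  -- the key inclusion: the ε-ball around f x lies in the convex hull of f '' S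
  have hball : Metric.ball (f x) ε ⊆ convexHull ℝ (f '' S) := by
    intro y hy
    by_contra hyK
    obtain ⟨φ, u, hφK, hφy⟩ := geometric_hahn_banach_closed_point hKconv hKcl hyK
    -- on the hull of S, φ is at most u + ε‖φ‖
    have hhull : convexHull ℝ S ⊆ {z | φ z ≤ u + ε * ‖φ‖} := by
      apply convexHull_min ?_ (convex_halfSpace_le (LinearMap.isLinear φ.toLinearMap) _)
      intro s hs
      have h1 : φ (f s) < u := hφK _ (subset_convexHull ℝ _ ⟨s, hs, rfl⟩)
      have h2 : φ s - φ (f s) ≤ ‖φ‖ * ‖s - f s‖ := by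
        calc φ s - φ (f s) = φ (s - f s) := by rw [map_sub]
        _ ≤ ‖φ (s - f s)‖ := le_abs_self _
        _ ≤ ‖φ‖ * ‖s - f s‖ := φ.le_opNorm _
      have h3 : ‖φ‖ * ‖s - f s‖ ≤ ‖φ‖ * ε :=
        mul_le_mul_of_nonneg_left (hper s (hS hs)).le (norm_nonneg _)
      show φ s ≤ u + ε * ‖φ‖
      linarith [mul_comm ε ‖φ‖]
    -- the closed ε-ball around y lies in the hull of S
    have hyball : Metric.closedBall y ε ⊆ convexHull ℝ S := by
      intro z hz
      apply hδball (S, x) hpP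
      simp only [Metric.mem_closedBall] at hz ⊢
      have h1 : dist y (f x) < ε := Metric.mem_ball.1 hy
      have h2 : dist (f x) x < ε := by
        rw [dist_eq_norm, ← norm_neg]
        simpa using hper x hxA
      calc dist z x ≤ dist z y + dist y (f x) + dist (f x) x := dist_triangle4 _ _ _ _
        _ ≤ ε + ε + ε := by linarith
        _ ≤ δ (S, x) := by linarith
    -- derive a contradiction using the Riesz representation of φ
    rcases eq_or_ne φ 0 with rfl | hφ0
    · obtain ⟨s, hs⟩ := hSne
      have := hφK _ (subset_convexHull ℝ _ ⟨s, hs, rfl⟩)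
      simp at this hφy
      linarith
    · set w := (InnerProductSpace.toDual ℝ (EuclideanSpace ℝ (Fin d))).symm φ with hw
      have hwφ : ∀ z : EuclideanSpace ℝ (Fin d), ⟪w, z⟫ = φ z := by
        intro z
        have : InnerProductSpace.toDual ℝ (EuclideanSpace ℝ (Fin d)) w = φ :=
          (InnerProductSpace.toDual ℝ (EuclideanSpace ℝ (Fin d))).apply_symm_apply φ
        rw [← this]; rfl
      have hwnorm : ‖w‖ = ‖φ‖ :=
        (InnerProductSpace.toDual ℝ (EuclideanSpace ℝ (Fin d))).symm.norm_map φ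
      have hw0 : w ≠ 0 := by
        intro h
        apply hφ0
        apply (InnerProductSpace.toDual ℝ (EuclideanSpace ℝ (Fin d))).symm.injective
        simpa [hw] using h
      have hwpos : 0 < ‖w‖ := norm_pos_iff.2 hw0
      set z := y + ε • (‖w‖⁻¹ • w) with hz
      have hzball : z ∈ Metric.closedBall y ε := by
        simp only [Metric.mem_closedBall, hz, dist_self_add_left]
        rw [norm_smul, norm_smul, norm_inv, norm_norm, Real.norm_eq_abs,
          abs_of_pos hεpos]
        rw [inv_mul_cancel₀ hwpos.ne']
        simp
      have hφz : φ z = φ y + ε * ‖w‖ := by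
        rw [← hwφ, hz, inner_add_right, inner_smul_right, inner_smul_right,
          real_inner_self_eq_norm_sq, hwφ]
        ring_nf
        rw [sq]
        field_simp
      have := hhull (hyball hzball)
      simp only [Set.mem_setOf_eq] at this
      rw [hφz, hwnorm] at this
      linarith [mul_comm ε ‖φ‖]
  exact interior_maximal hball Metric.isOpen_ball (Metric.mem_ball_self hεpos)
end
end

section
/- Let d ≥ 2 and ℓ ≥ 1 be integers, let S ⊆ ℝ^d be a finite set in general position, and let Q ⊆ ℝ^d be a finite set that is ℓ-hole-free. Suppose that for every d+1 distinct points of S, the interior of their convex hull contains a point of Q. Then S ∪ Q is (ℓ + d)-hole-free. -/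
noncomputable section

/-- A set `S ⊆ ℝ^d` is in general position if for every `k < d`, every `k`-dimensional
affine subspace of `ℝ^d` contains at most `k + 1` points of `S`. -/
def InGeneralPosition (d : ℕ) (S : Set (EuclideanSpace ℝ (Fin d))) : Prop :=
  ∀ k : ℕ, k < d → ∀ V : AffineSubspace ℝ (EuclideanSpace ℝ (Fin d)),
    Module.finrank ℝ V.direction = k → (S ∩ (V : Set (EuclideanSpace ℝ (Fin d)))).ncard ≤ k + 1

theorem statement19 (d ℓ : ℕ) (hd : 2 ≤ d) (hℓ : 1 ≤ ℓ)
    (S Q : Set (EuclideanSpace ℝ (Fin d))) (hS : S.Finite) (hQ : Q.Finite)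
    (hgp : InGeneralPosition d S) (hQhf : HoleFree ℓ Q)
    (hfill : ∀ T : Set (EuclideanSpace ℝ (Fin d)), T ⊆ S → T.Finite → T.ncard = d + 1 →
      ∃ q ∈ Q, q ∈ interior (convexHull ℝ T)) :
    HoleFree (ℓ + d) (S ∪ Q) := by
  intro T hTsub hTfin hTcard
  by_cases hc : d + 1 ≤ (T ∩ S).ncard
  · obtain ⟨U, hUsub, hUcard⟩ := Set.exists_subset_card_eq hc
    obtain ⟨q, hqQ, hq⟩ := hfill U (hUsub.trans Set.inter_subset_right)
      (hTfin.inter_of_left S |>.subset hUsub) hUcard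
    exact ⟨q, Or.inr hqQ,
      interior_mono (convexHull_mono (hUsub.trans Set.inter_subset_left)) hq⟩
  · have hTQ : ℓ ≤ (T ∩ Q).ncard := by
      have hun : T = (T ∩ S) ∪ (T ∩ Q) := by
        ext x; constructor
        · intro hx
          rcases hTsub hx with h | h
          · exact Or.inl ⟨hx, h⟩
          · exact Or.inr ⟨hx, h⟩
        · rintro (⟨h, _⟩ | ⟨h, _⟩) <;> exact h
      have := Set.ncard_union_le (T ∩ S) (T ∩ Q)
      rw [← hun, hTcard] at this
      omega
    obtain ⟨U, hUsub, hUcard⟩ := Set.exists_subset_card_eq hTQ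
    obtain ⟨q, hqQ, hq⟩ := hQhf U (hUsub.trans Set.inter_subset_right)
      (hTfin.inter_of_left Q |>.subset hUsub) hUcard
    exact ⟨q, Or.inr hqQ,
      interior_mono (convexHull_mono (hUsub.trans Set.inter_subset_left)) hq⟩
end
end
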